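/- For every integer n ≥ 2 and all real numbers 0 < r ≤ R, one has (sinh r / sinh R)^n ≤ (∫₀^r sinh^{n−1} x dx)/(∫₀^R sinh^{n−1} x dx) ≤ (sinh r / sinh R)^{n−1}. -/

import Mathlib

open Real

private lemma sinh_aux
    (m : ℕ) (hm : 1 ≤ m) (r R : ℝ) (hr : 0 < r) (hrR : r ≤ R) :
    (Real.sinh r / Real.sinh R) ^ (m + 1) ≤
        (∫ x in (0:ℝ)..r, Real.sinh x ^ m) / (∫ x in (0:ℝ)..R, Real.sinh x ^ m) ∧
      (∫ x in (0:ℝ)..r, Real.sinh x ^ m) / (∫ x in (0:ℝ)..R, Real.sinh x ^ m) ≤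
        (Real.sinh r / Real.sinh R) ^ m := by
  have hc : Continuous fun x : ℝ => sinh x ^ m := Real.continuous_sinh.pow m
  set F : ℝ → ℝ := fun u => ∫ x in (0:ℝ)..u, sinh x ^ m with hFdef
  have hF : ∀ t : ℝ, HasDerivAt F (sinh t ^ m) t := fun t =>
    intervalIntegral.integral_hasDerivAt_right (hc.intervalIntegrable 0 t)
      (hc.stronglyMeasurableAtFilter _ _) hc.continuousAt
  have hDF : Differentiable ℝ F := fun t => (hF t).differentiableAt
  have hF0 : F 0 = 0 := intervalIntegral.integral_same
  have hFpos : ∀ t : ℝ, 0 < t → 0 < F t := fun t ht =>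
    intervalIntegral.intervalIntegral_pos_of_pos_on (hc.intervalIntegrable 0 t)
      (fun x hx => pow_pos (Real.sinh_pos_iff.2 hx.1) m) ht
  have hFnn : ∀ t : ℝ, 0 ≤ t → 0 ≤ F t := by
    intro t ht
    rcases eq_or_lt_of_le ht with h | h
    · simp [← h, hF0]
    · exact (hFpos t h).le
  have hmm : m - 1 + 1 = m := by omega
  -- (A): m * F t ≤ sinh t ^ m for t ≥ 0
  have lemA : ∀ t : ℝ, 0 ≤ t → (m : ℝ) * F t ≤ sinh t ^ m := by
    intro t ht
    have hG : ∀ u : ℝ, HasDerivAt (fun u => sinh u ^ m - (m : ℝ) * F u)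
        ((m : ℝ) * sinh u ^ (m - 1) * cosh u - (m : ℝ) * sinh u ^ m) u := fun u =>
      ((Real.hasDerivAt_sinh u).pow m).sub ((hF u).const_mul (m : ℝ))
    have hmono : MonotoneOn (fun u => sinh u ^ m - (m : ℝ) * F u) (Set.Ici (0:ℝ)) := by
      apply monotoneOn_of_deriv_nonneg (convex_Ici 0)
        (((Real.continuous_sinh.pow m).sub (continuous_const.mul hDF.continuous)).continuousOn)
        (fun u _ => (hG u).differentiableAt.differentiableWithinAt)
      intro u hu
      rw [interior_Ici] at hu
      change 0 ≤ deriv (fun u => sinh u ^ m - (m : ℝ) * F u) u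
      rw [(hG u).deriv]
      have hs : 0 ≤ sinh u := (Real.sinh_pos_iff.2 hu).le
      have hsc : sinh u ≤ cosh u := (Real.sinh_lt_cosh u).le
      have hpow : sinh u ^ m = sinh u ^ (m - 1) * sinh u := by
        conv_lhs => rw [← hmm, pow_succ]
      rw [hpow]
      have h1 : sinh u ^ (m-1) * sinh u ≤ sinh u ^ (m-1) * cosh u :=
        mul_le_mul_of_nonneg_left hsc (pow_nonneg hs _)
      have hm' : (1:ℝ) ≤ (m:ℝ) := by exact_mod_cast hm
      nlinarith [h1, hm']
    have := hmono (Set.self_mem_Ici) (Set.mem_Ici.2 ht) ht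
    simp only [hF0, Real.sinh_zero] at this
    rw [zero_pow (by omega : m ≠ 0)] at this
    linarith
  -- (*): m * (cosh t * F t) ≤ sinh t ^ (m+1) for t ≥ 0
  have lemStar : ∀ t : ℝ, 0 ≤ t → (m : ℝ) * (cosh t * F t) ≤ sinh t ^ (m + 1) := by
    intro t ht
    have hG : ∀ u : ℝ, HasDerivAt (fun u => sinh u ^ (m+1) - (m : ℝ) * (cosh u * F u))
        (((m : ℝ)+1) * sinh u ^ m * cosh u
          - (m : ℝ) * (sinh u * F u + cosh u * sinh u ^ m)) u := by
      intro u
      have h1 : HasDerivAt (fun u => sinh u ^ (m+1)) (((m:ℝ)+1) * sinh u ^ m * cosh u) u := by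
        have := (Real.hasDerivAt_sinh u).pow (m+1)
        simp at this; exact this
      exact h1.sub (((Real.hasDerivAt_cosh u).mul (hF u)).const_mul (m : ℝ))
    have hmono : MonotoneOn (fun u => sinh u ^ (m+1) - (m : ℝ) * (cosh u * F u))
        (Set.Ici (0:ℝ)) := by
      apply monotoneOn_of_deriv_nonneg (convex_Ici 0)
        (((Real.continuous_sinh.pow (m+1)).sub
          (continuous_const.mul (Real.continuous_cosh.mul hDF.continuous))).continuousOn)
        (fun u _ => (hG u).differentiableAt.differentiableWithinAt)
      intro u hu
      rw [interior_Ici] at hu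
      change 0 ≤ deriv (fun u => sinh u ^ (m+1) - (m : ℝ) * (cosh u * F u)) u
      rw [(hG u).deriv]
      have hs : 0 ≤ sinh u := (Real.sinh_pos_iff.2 hu).le
      have hsc : sinh u ≤ cosh u := (Real.sinh_lt_cosh u).le
      have hA := lemA u hu.le
      have hFn := hFnn u hu.le
      have hspow : 0 ≤ sinh u ^ m := pow_nonneg hs m
      -- target: 0 ≤ (m+1) sinh^m cosh - m (sinh F + cosh sinh^m) = sinh^m cosh - m sinh F
      have h2 : (m:ℝ) * (sinh u * F u) ≤ sinh u ^ m * sinh u := by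
        calc (m:ℝ) * (sinh u * F u) = sinh u * ((m:ℝ) * F u) := by ring
        _ ≤ sinh u * sinh u ^ m := mul_le_mul_of_nonneg_left hA hs
        _ = sinh u ^ m * sinh u := by ring
      have h3 : sinh u ^ m * sinh u ≤ sinh u ^ m * cosh u :=
        mul_le_mul_of_nonneg_left hsc hspow
      nlinarith
    have := hmono (Set.self_mem_Ici) (Set.mem_Ici.2 ht) ht
    simp only [hF0, Real.sinh_zero, Real.cosh_zero] at this
    rw [zero_pow (by omega : m + 1 ≠ 0)] at this
    linarith
  -- (B): sinh t ^ (m+1) ≤ (m+1) * (cosh t * F t) for t ≥ 0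
  have lemB : ∀ t : ℝ, 0 ≤ t → sinh t ^ (m + 1) ≤ ((m : ℝ) + 1) * (cosh t * F t) := by
    intro t ht
    have hG : ∀ u : ℝ, HasDerivAt (fun u => ((m:ℝ)+1) * (cosh u * F u) - sinh u ^ (m+1))
        (((m : ℝ)+1) * (sinh u * F u + cosh u * sinh u ^ m)
          - ((m : ℝ)+1) * sinh u ^ m * cosh u) u := by
      intro u
      have h1 : HasDerivAt (fun u => sinh u ^ (m+1)) (((m:ℝ)+1) * sinh u ^ m * cosh u) u := by
        have := (Real.hasDerivAt_sinh u).pow (m+1)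
        simp at this; exact this
      exact ((((Real.hasDerivAt_cosh u).mul (hF u)).const_mul ((m : ℝ)+1))).sub h1
    have hmono : MonotoneOn (fun u => ((m:ℝ)+1) * (cosh u * F u) - sinh u ^ (m+1))
        (Set.Ici (0:ℝ)) := by
      apply monotoneOn_of_deriv_nonneg (convex_Ici 0)
        ((((continuous_const.mul (Real.continuous_cosh.mul hDF.continuous))).sub
          (Real.continuous_sinh.pow (m+1))).continuousOn)
        (fun u _ => (hG u).differentiableAt.differentiableWithinAt)
      intro u hu
      rw [interior_Ici] at hu
      change 0 ≤ deriv (fun u => ((m:ℝ)+1) * (cosh u * F u) - sinh u ^ (m+1)) u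
      rw [(hG u).deriv]
      have hs : 0 ≤ sinh u := (Real.sinh_pos_iff.2 hu).le
      have hFn := hFnn u hu.le
      nlinarith [mul_nonneg hs hFn]
    have := hmono (Set.self_mem_Ici) (Set.mem_Ici.2 ht) ht
    simp only [hF0, Real.sinh_zero, Real.cosh_zero] at this
    rw [zero_pow (by omega : m + 1 ≠ 0)] at this
    linarith
  -- positivity facts
  have hR : 0 < R := lt_of_lt_of_le hr hrR
  have hsr : 0 < sinh r := Real.sinh_pos_iff.2 hr
  have hsR : 0 < sinh R := Real.sinh_pos_iff.2 hR
  have hFr : 0 < F r := hFpos r hr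
  have hFR : 0 < F R := hFpos R hR
  -- g₁ = F / sinh^m monotone on Icc r R
  have hg1 : MonotoneOn (fun u => F u / sinh u ^ m) (Set.Icc r R) := by
    apply monotoneOn_of_deriv_nonneg (convex_Icc r R)
    · apply ContinuousOn.div hDF.continuous.continuousOn
        (Real.continuous_sinh.pow m).continuousOn
      intro u hu
      exact pow_ne_zero m (Real.sinh_pos_iff.2 (lt_of_lt_of_le hr hu.1)).ne'
    · intro u hu
      rw [interior_Icc] at hu
      have hsu : 0 < sinh u := Real.sinh_pos_iff.2 (lt_trans hr hu.1)
      exact ((hF u).div ((Real.hasDerivAt_sinh u).pow m)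
        (pow_ne_zero m hsu.ne')).differentiableAt.differentiableWithinAt
    · intro u hu
      rw [interior_Icc] at hu
      have hu0 : 0 < u := lt_trans hr hu.1
      have hsu : 0 < sinh u := Real.sinh_pos_iff.2 hu0
      rw [show (fun u => F u / sinh u ^ m) = F / sinh ^ m from rfl,
        ((hF u).div ((Real.hasDerivAt_sinh u).pow m) (pow_ne_zero m hsu.ne')).deriv]
      apply div_nonneg _ (sq_nonneg _)
      rw [sub_nonneg]
      have hstar := lemStar u hu0.le
      have key : F u * ((m:ℝ) * sinh u ^ (m-1) * cosh u) ≤ sinh u ^ (m+1) * sinh u ^ (m-1) := by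
        calc F u * ((m:ℝ) * sinh u ^ (m-1) * cosh u)
            = ((m:ℝ) * (cosh u * F u)) * sinh u ^ (m-1) := by ring
          _ ≤ sinh u ^ (m+1) * sinh u ^ (m-1) :=
            mul_le_mul_of_nonneg_right hstar (pow_nonneg hsu.le _)
      have e1 : sinh u ^ (m+1) * sinh u ^ (m-1) = sinh u ^ m * sinh u ^ m := by
        rw [← pow_add, ← pow_add]; congr 1; omega
      simp only [Pi.pow_apply]
      linarith [key, e1 ▸ key]
  -- g₂ = F / sinh^(m+1) antitone on Icc r R
  have hg2 : AntitoneOn (fun u => F u / sinh u ^ (m+1)) (Set.Icc r R) := by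
    apply antitoneOn_of_deriv_nonpos (convex_Icc r R)
    · apply ContinuousOn.div hDF.continuous.continuousOn
        (Real.continuous_sinh.pow (m+1)).continuousOn
      intro u hu
      exact pow_ne_zero (m+1) (Real.sinh_pos_iff.2 (lt_of_lt_of_le hr hu.1)).ne'
    · intro u hu
      rw [interior_Icc] at hu
      have hsu : 0 < sinh u := Real.sinh_pos_iff.2 (lt_trans hr hu.1)
      exact ((hF u).div ((Real.hasDerivAt_sinh u).pow (m+1))
        (pow_ne_zero (m+1) hsu.ne')).differentiableAt.differentiableWithinAt
    · intro u hu
      rw [interior_Icc] at hu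
      have hu0 : 0 < u := lt_trans hr hu.1
      have hsu : 0 < sinh u := Real.sinh_pos_iff.2 hu0
      rw [show (fun u => F u / sinh u ^ (m+1)) = F / sinh ^ (m+1) from rfl,
        ((hF u).div ((Real.hasDerivAt_sinh u).pow (m+1)) (pow_ne_zero (m+1) hsu.ne')).deriv]
      apply div_nonpos_of_nonpos_of_nonneg _ (sq_nonneg _)
      rw [sub_nonpos]
      have hB := lemB u hu0.le
      have e2 : (m + 1 : ℕ) - 1 = m := by omega
      rw [e2]
      push_cast
      calc sinh u ^ m * sinh u ^ (m+1) = sinh u ^ (m+1) * sinh u ^ m := by ring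
        _ ≤ (((m:ℝ)+1) * (cosh u * F u)) * sinh u ^ m :=
            mul_le_mul_of_nonneg_right hB (pow_nonneg hsu.le _)
        _ = F u * (((m:ℝ) + 1) * sinh u ^ m * cosh u) := by ring
  have hmem_r : r ∈ Set.Icc r R := ⟨le_refl r, hrR⟩
  have hmem_R : R ∈ Set.Icc r R := ⟨hrR, le_refl R⟩
  constructor
  · -- lower bound
    have h := hg2 hmem_r hmem_R hrR
    rw [div_pow, div_le_div_iff₀ (pow_pos hsR (m+1)) hFR]
    rw [div_le_div_iff₀ (pow_pos hsR (m+1)) (pow_pos hsr (m+1))] at h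
    nlinarith
  · -- upper bound
    have h := hg1 hmem_r hmem_R hrR
    rw [div_pow, div_le_div_iff₀ hFR (pow_pos hsR m)]
    rw [div_le_div_iff₀ (pow_pos hsr m) (pow_pos hsR m)] at h
    nlinarith

theorem sinh_integral_ratio_bounds
    (n : ℕ) (hn : 2 ≤ n) (r R : ℝ) (hr : 0 < r) (hrR : r ≤ R) :
    (Real.sinh r / Real.sinh R) ^ n ≤
        (∫ x in (0 : ℝ)..r, Real.sinh x ^ (n - 1)) /
          (∫ x in (0 : ℝ)..R, Real.sinh x ^ (n - 1)) ∧
      (∫ x in (0 : ℝ)..r, Real.sinh x ^ (n - 1)) /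
          (∫ x in (0 : ℝ)..R, Real.sinh x ^ (n - 1)) ≤
        (Real.sinh r / Real.sinh R) ^ (n - 1) := by
  have h := sinh_aux (n - 1) (by omega) r R hr hrR
  have e : n - 1 + 1 = n := by omega
  rw [e] at h
  exact h
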